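/- Suppose (A*, u*) minimizes f over all pairs (A, u) where A is a generalized Mahalanobis operator on H and u ∈ H, and write u* = u^T + u^⊥ with u^T ∈ V and ⟨A* u^⊥, v⟩ = 0 for every v ∈ V. Let B* be a generalized Mahalanobis operator on V with ⟨B* x, y⟩ = ⟨A* x, y⟩ for all x, y ∈ V. Then (B*, u^T) minimizes f_V over all pairs (B, u) where B is a generalized Mahalanobis operator on V and u ∈ V. -/

import Mathlib

open scoped RealInnerProductSpace

/-- A continuous linear operator on a real inner product space is a *generalized Mahalanobis
operator* if it is self-adjoint and positive definite. -/
def IsGenMahalanobis {H : Type*} [NormedAddCommGroup H] [InnerProductSpace ℝ H]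
    (A : H →L[ℝ] H) : Prop :=
  (∀ x y : H, ⟪A x, y⟫ = ⟪x, A y⟫) ∧ ∀ x : H, x ≠ 0 → 0 < ⟪A x, x⟫

/-- A linear operator on a (subspace viewed as an) inner product space is a *generalized
Mahalanobis operator* if it is self-adjoint and positive definite. -/
def IsGenMahalanobisLin {V : Type*} [NormedAddCommGroup V] [InnerProductSpace ℝ V]
    (B : V →ₗ[ℝ] V) : Prop :=
  (∀ x y : V, ⟪B x, y⟫ = ⟪x, B y⟫) ∧ ∀ x : V, x ≠ 0 → 0 < ⟪B x, x⟫

/-- The paired-comparison empirical objective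
`f(A, u) = Σ_i ℓ (sgn (‖z^i_1 - u‖_A² - ‖z^i_2 - u‖_A²)) (y i)`,
where `‖x‖_A² = ⟪A x, x⟫`. -/
noncomputable def pairObj {H : Type*} [NormedAddCommGroup H] [InnerProductSpace ℝ H]
    {n : ℕ} (ℓ : ℝ → ℝ → ℝ) (z₁ z₂ : Fin n → H) (y : Fin n → ℝ)
    (A : H → H) (u : H) : ℝ :=
  ∑ i, ℓ (Real.sign (⟪A (z₁ i - u), z₁ i - u⟫ - ⟪A (z₂ i - u), z₂ i - u⟫)) (y i)

/-- If `(A*, u*)` minimizes the paired-comparison objective `f` over `H`,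
`u* = u^T + u^⊥` is the `⟪·,·⟫_{A*}`-orthogonal decomposition with `u^T ∈ V`, and `B*` is a
generalized Mahalanobis operator on `V` agreeing with `A*` on `V`, then `(B*, u^T)` minimizes
the finite-dimensional objective `f_V`. -/
theorem minimizer_restricts_to_subspace_minimizer
    {H : Type*} [NormedAddCommGroup H] [InnerProductSpace ℝ H] [CompleteSpace H]
    (V : Submodule ℝ H) [FiniteDimensional ℝ V]
    {n : ℕ} (ℓ : ℝ → ℝ → ℝ) (z₁ z₂ : Fin n → H) (y : Fin n → ℝ)
    (hz₁ : ∀ i, z₁ i ∈ V) (hz₂ : ∀ i, z₂ i ∈ V)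
    (hy : ∀ i, y i = 1 ∨ y i = -1)
    (Astar : H →L[ℝ] H) (hAstar : IsGenMahalanobis Astar)
    (ustar uT uP : H) (hu : ustar = uT + uP) (huT : uT ∈ V)
    (huP : ∀ v ∈ V, ⟪Astar uP, v⟫ = 0)
    (hmin : ∀ (A : H →L[ℝ] H), IsGenMahalanobis A → ∀ u : H,
      pairObj ℓ z₁ z₂ y ⇑Astar ustar ≤ pairObj ℓ z₁ z₂ y ⇑A u)
    (Bstar : V →ₗ[ℝ] V) (hBstar : IsGenMahalanobisLin Bstar)
    (hagree : ∀ x y' : V, ⟪Bstar x, y'⟫ = ⟪Astar (x : H), (y' : H)⟫) :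
    ∀ (B : V →ₗ[ℝ] V), IsGenMahalanobisLin B → ∀ u : V,
      pairObj ℓ (fun i => (⟨z₁ i, hz₁ i⟩ : V)) (fun i => (⟨z₂ i, hz₂ i⟩ : V)) y ⇑Bstar ⟨uT, huT⟩ ≤
        pairObj ℓ (fun i => (⟨z₁ i, hz₁ i⟩ : V)) (fun i => (⟨z₂ i, hz₂ i⟩ : V)) y ⇑B u := by
  intro B hB u
  classical
  have hAsym := hAstar.1
  -- positivity helper
  have pos_of_ne : ∀ w : H, w ≠ 0 → (0:ℝ) < ⟪w, w⟫ := by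
    intro w hw
    rw [real_inner_self_eq_norm_mul_norm]
    exact mul_pos (norm_pos_iff.mpr hw) (norm_pos_iff.mpr hw)
  -- Step 1: translating by `uP` only shifts the `A*`-quadratic form by a constant on `V`.
  have key : ∀ z : H, z ∈ V → ⟪Astar (z - ustar), z - ustar⟫
      = ⟪Astar (z - uT), z - uT⟫ + ⟪Astar uP, uP⟫ := by
    have quad : ∀ w : H, ⟪Astar uP, w⟫ = 0 →
        ⟪Astar (w - uP), w - uP⟫ = ⟪Astar w, w⟫ + ⟪Astar uP, uP⟫ := by
      intro w h1
      have h2 : ⟪Astar w, uP⟫ = 0 := by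
        rw [hAsym]; rw [← h1]; exact real_inner_comm _ _
      rw [map_sub, inner_sub_left, inner_sub_right, inner_sub_right, h1, h2]
      ring
    intro z hz
    have hmem : z - uT ∈ V := V.sub_mem hz huT
    have hzz : z - ustar = (z - uT) - uP := by rw [hu]; abel
    rw [hzz, quad _ (huP _ hmem)]
  -- Step 2: the value of `f_V` at `(B*, uT)` equals the value of `f` at `(A*, u*)`.
  have hBv : ∀ (w : V), ⟪Bstar w, w⟫ = ⟪Astar (w : H), (w : H)⟫ := fun w => hagree w w
  have eq₁ : pairObj ℓ (fun i => (⟨z₁ i, hz₁ i⟩ : V)) (fun i => (⟨z₂ i, hz₂ i⟩ : V)) y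
      ⇑Bstar ⟨uT, huT⟩ = pairObj ℓ z₁ z₂ y ⇑Astar ustar := by
    unfold pairObj
    refine Finset.sum_congr rfl fun i _ => ?_
    congr 2
    have c1 : (((⟨z₁ i, hz₁ i⟩ : V) - ⟨uT, huT⟩ : V) : H) = z₁ i - uT := rfl
    have c2 : (((⟨z₂ i, hz₂ i⟩ : V) - ⟨uT, huT⟩ : V) : H) = z₂ i - uT := rfl
    rw [hBv, hBv, c1, c2, key _ (hz₁ i), key _ (hz₂ i)]
    ring
  -- Step 3: extend `B` to a generalized Mahalanobis operator `A'` on `H`.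
  haveI : CompleteSpace V := FiniteDimensional.complete ℝ V
  set P : H →L[ℝ] V := V.orthogonalProjectionOnto with hP
  set A' : H →L[ℝ] H :=
    V.subtypeL.comp ((LinearMap.toContinuousLinearMap B).comp P)
      + (ContinuousLinearMap.id ℝ H - V.subtypeL.comp P) with hA'
  have hA'apply : ∀ x : H, A' x = ↑(B (P x)) + (x - ↑(P x)) := by
    intro x; simp [hA']
  have ho : ∀ w : H, w - ↑(P w) ∈ Vᗮ := fun w =>
    Submodule.sub_starProjection_mem_orthogonal (K := V) w
  have hA'inner : ∀ x x' : H,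
      ⟪A' x, x'⟫ = ⟪B (P x), P x'⟫ + ⟪x - ↑(P x), x' - ↑(P x')⟫ := by
    intro x x'
    have hx' : x' = ↑(P x') + (x' - ↑(P x')) := by abel
    rw [hA'apply, inner_add_left]
    have e1 : ⟪(↑(B (P x)) : H), x'⟫ = ⟪B (P x), P x'⟫ := by
      conv_lhs => rw [hx']
      rw [inner_add_right,
        Submodule.inner_right_of_mem_orthogonal (B (P x)).2 (ho x'), add_zero]
      rfl
    have e2 : ⟪x - ↑(P x), x'⟫ = ⟪x - ↑(P x), x' - ↑(P x')⟫ := by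
      conv_lhs => rw [hx']
      rw [inner_add_right,
        Submodule.inner_left_of_mem_orthogonal (P x').2 (ho x), zero_add]
    rw [e1, e2]
  have hPv : ∀ w : V, P (↑w : H) = w := fun w =>
    Submodule.orthogonalProjectionOnto_mem_subspace_eq_self w
  have hA'mah : IsGenMahalanobis A' := by
    constructor
    · intro a b
      have h1 := hA'inner a b
      have h2 := hA'inner b a
      have h3 : ⟪a, A' b⟫ = ⟪A' b, a⟫ := real_inner_comm _ _
      have h4 : ⟪B (P a), P b⟫ = ⟪B (P b), P a⟫ := by
        rw [hB.1]; exact real_inner_comm _ _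
      have h5 : ⟪a - ↑(P a), b - ↑(P b)⟫ = ⟪b - ↑(P b), a - ↑(P a)⟫ :=
        real_inner_comm _ _
      rw [h1, h3, h2, h4, h5]
    · intro x hx
      rw [hA'inner]
      rcases eq_or_ne (P x) 0 with h0 | h0
      · have hxP : x - ↑(P x) ≠ 0 := by
          intro hcontra
          apply hx
          have hxe : x = ↑(P x) := sub_eq_zero.mp hcontra
          rw [hxe, h0]; simp
        have hpos := pos_of_ne _ hxP
        have hz : ⟪B (P x), P x⟫ = 0 := by rw [h0]; simp
        linarith
      · have h1 : (0:ℝ) < ⟪B (P x), P x⟫ := hB.2 _ h0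
        have h2 : (0:ℝ) ≤ ⟪x - ↑(P x), x - ↑(P x)⟫ := real_inner_self_nonneg
        linarith
  -- On `V`, `A'` agrees with `B`.
  have hA'agree : ∀ w : V, ⟪A' (↑w : H), (↑w : H)⟫ = ⟪B w, w⟫ := by
    intro w
    rw [hA'inner, hPv]
    simp
  have eq₂ : pairObj ℓ z₁ z₂ y ⇑A' ↑u
      = pairObj ℓ (fun i => (⟨z₁ i, hz₁ i⟩ : V)) (fun i => (⟨z₂ i, hz₂ i⟩ : V)) y ⇑B u := by
    unfold pairObj
    refine Finset.sum_congr rfl fun i _ => ?_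
    congr 2
    have c1 : z₁ i - ↑u = (((⟨z₁ i, hz₁ i⟩ : V) - u : V) : H) := rfl
    have c2 : z₂ i - ↑u = (((⟨z₂ i, hz₂ i⟩ : V) - u : V) : H) := rfl
    rw [c1, c2, hA'agree, hA'agree]
  calc pairObj ℓ (fun i => (⟨z₁ i, hz₁ i⟩ : V)) (fun i => (⟨z₂ i, hz₂ i⟩ : V)) y ⇑Bstar ⟨uT, huT⟩
      = pairObj ℓ z₁ z₂ y ⇑Astar ustar := eq₁
    _ ≤ pairObj ℓ z₁ z₂ y ⇑A' ↑u := hmin A' hA'mah ↑u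
    _ = _ := eq₂
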